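/- For a graph with D = d and d+1 distinct eigenvalues, the average number of shortest d-paths between vertices at distance d satisfies ā_d^{(d)} = 1/ω_d = π_0/n unconditionally, where ω_d = n/π_0 is the leading coefficient of the Hoffman polynomial. -/

import Mathlib

open Matrix Polynomial Finset

/-- The distance-`i` matrix of a graph on `Fin n`. -/
noncomputable def distMatrix {n : ℕ} (G : SimpleGraph (Fin n)) (i : ℕ) :
    Matrix (Fin n) (Fin n) ℝ :=
  Matrix.of fun u v => if G.dist u v = i then 1 else 0

/-- The 0-1 matrix of pairs at distance at most `i` (`S_i`). -/
noncomputable def ballMatrix {n : ℕ} (G : SimpleGraph (Fin n)) (i : ℕ) :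
    Matrix (Fin n) (Fin n) ℝ :=
  Matrix.of fun u v => if G.dist u v ≤ i then 1 else 0

/-- The normalized trace inner product `⟨R,S⟩ = (1/n) tr (R S)`. -/
noncomputable def ip {n : ℕ} (R S : Matrix (Fin n) (Fin n) ℝ) : ℝ :=
  (1 / (n : ℝ)) * (R * S).trace

/-- Average crossed local multiplicity `m̄_{ij} = ⟨E_j, A_i⟩ / ‖A_i‖²`. -/
noncomputable def mbar {n : ℕ} (G : SimpleGraph (Fin n)) (E : Matrix (Fin n) (Fin n) ℝ)
    (i : ℕ) : ℝ :=
  ip E (distMatrix G i) / ip (distMatrix G i) (distMatrix G i)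

lemma pow_apply_zero_of_lt_dist {n : ℕ} (G : SimpleGraph (Fin n)) [DecidableRel G.Adj]
    {u v : Fin n} {k : ℕ} (hk : k < G.dist u v) :
    (G.adjMatrix ℝ ^ k) u v = 0 := by
  rw [SimpleGraph.adjMatrix_pow_apply_eq_card_walk]
  have : IsEmpty { p : G.Walk u v // p.length = k } := by
    constructor
    rintro ⟨p, hp⟩
    exact absurd (G.dist_le p) (by omega)
  simp [Fintype.card_eq_zero_iff.mpr this]
  rw [Finset.eq_empty_iff_forall_notMem]
  intro p hp
  exact this.false ⟨p, SimpleGraph.mem_finsetWalkLength_iff.mp hp⟩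

lemma aeval_apply_zero {n d : ℕ} (G : SimpleGraph (Fin n)) [DecidableRel G.Adj]
    {u v : Fin n} (huv : G.dist u v = d) (f : Polynomial ℝ) (hf : f.natDegree < d) :
    (Polynomial.aeval (G.adjMatrix ℝ) f) u v = 0 := by
  rw [Polynomial.aeval_eq_sum_range]
  rw [Matrix.sum_apply]
  apply Finset.sum_eq_zero
  intro k hk
  simp only [Finset.mem_range] at hk
  have : (G.adjMatrix ℝ ^ k) u v = 0 := pow_apply_zero_of_lt_dist G (by omega)
  simp [this]

lemma pow_d_apply {n d : ℕ} (hn : 0 < n) (G : SimpleGraph (Fin n)) [DecidableRel G.Adj]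
    (hd : 1 ≤ d) (H : Polynomial ℝ) (hHdeg : H.natDegree = d)
    (hH : Polynomial.aeval (G.adjMatrix ℝ) H = Matrix.of fun _ _ => (1 : ℝ))
    {u v : Fin n} (huv : G.dist u v = d) :
    (G.adjMatrix ℝ ^ d) u v = 1 / H.leadingCoeff := by
  have hHne : H ≠ 0 := by
    intro h; rw [h] at hHdeg; simp at hHdeg; omega
  have hω : H.leadingCoeff ≠ 0 := Polynomial.leadingCoeff_ne_zero.mpr hHne
  set ω := H.leadingCoeff with hωdef
  set f : Polynomial ℝ := Polynomial.C ω * Polynomial.X ^ d - H with hf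
  have hcoeff : f.coeff d = 0 := by
    simp [hf, Polynomial.coeff_X_pow, ← hHdeg, Polynomial.coeff_natDegree]
    rw [hωdef, sub_self]
  have hfdeg : f.natDegree < d := by
    have hle : f.natDegree ≤ d := by
      apply le_trans (Polynomial.natDegree_sub_le _ _)
      simp [hHdeg]
      apply le_trans (Polynomial.natDegree_C_mul_le _ _)
      simp
    rcases lt_or_eq_of_le hle with h | h
    · exact h
    · exfalso
      have : f = 0 := by
        rw [← Polynomial.leadingCoeff_eq_zero, Polynomial.leadingCoeff, h, hcoeff]
      rw [this] at h; simp at h; omega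
  have h0 : (Polynomial.aeval (G.adjMatrix ℝ) f) u v = 0 :=
    aeval_apply_zero G huv f hfdeg
  rw [hf] at h0
  simp only [map_sub, _root_.map_mul, Polynomial.aeval_C, map_pow, Polynomial.aeval_X, hH] at h0
  rw [Algebra.algebraMap_eq_smul_one, smul_mul_assoc, one_mul] at h0
  simp only [Matrix.sub_apply, Matrix.smul_apply, Matrix.of_apply, smul_eq_mul] at h0
  field_simp
  linarith


/-- For a graph with `D = d`, the average number of shortest `d`-paths between vertices at
distance `d` satisfies `ā_d^{(d)} = 1/ω_d = π_0/n` unconditionally, where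
`ω_d = n/π_0` is the leading coefficient of the Hoffman polynomial `H` (with `H(A) = J`). -/
theorem avg_shortest_dpaths_unconditional
    {n d : ℕ} (hn : 0 < n) (G : SimpleGraph (Fin n)) [DecidableRel G.Adj]
    (hconn : G.Connected) (δ : ℕ) (hreg : G.IsRegularOfDegree δ)
    (hdiam : G.diam = d) (hd : 1 ≤ d)
    (H : Polynomial ℝ) (hHdeg : H.natDegree = d)
    (hH : Polynomial.aeval (G.adjMatrix ℝ) H = Matrix.of fun _ _ => (1 : ℝ))
    (pi0 : ℝ) (hpi0 : pi0 ≠ 0) (hlead : H.leadingCoeff = (n : ℝ) / pi0) :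
    ip ((G.adjMatrix ℝ) ^ d) (distMatrix G d) / ip (distMatrix G d) (distMatrix G d)
        = 1 / H.leadingCoeff ∧
    ip ((G.adjMatrix ℝ) ^ d) (distMatrix G d) / ip (distMatrix G d) (distMatrix G d)
        = pi0 / (n : ℝ) := by
  have hHne : H ≠ 0 := by
    intro h; rw [h] at hHdeg; simp at hHdeg; omega
  have hω : H.leadingCoeff ≠ 0 := Polynomial.leadingCoeff_ne_zero.mpr hHne
  set ω := H.leadingCoeff with hωdef
  set N : ℝ := ∑ u : Fin n, ∑ v : Fin n, (if G.dist u v = d then (1:ℝ) else 0) with hN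
  have htr1 : ((G.adjMatrix ℝ) ^ d * distMatrix G d).trace = (1/ω) * N := by
    simp only [Matrix.trace, Matrix.diag, Matrix.mul_apply, hN, Finset.mul_sum]
    apply Finset.sum_congr rfl; intro u _
    apply Finset.sum_congr rfl; intro v _
    rw [distMatrix, Matrix.of_apply, show G.dist v u = G.dist u v from SimpleGraph.dist_comm]
    by_cases h : G.dist u v = d
    · simp [h, pow_d_apply hn G hd H hHdeg hH h]; exact hωdef.symm
    · simp [h]
  have htr2 : (distMatrix G d * distMatrix G d).trace = N := by
    simp only [Matrix.trace, Matrix.diag, Matrix.mul_apply, hN]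
    apply Finset.sum_congr rfl; intro u _
    apply Finset.sum_congr rfl; intro v _
    rw [distMatrix, Matrix.of_apply, Matrix.of_apply, show G.dist v u = G.dist u v from SimpleGraph.dist_comm]
    by_cases h : G.dist u v = d <;> simp [h]
  have hNpos : 0 < N := by
    have : Nonempty (Fin n) := ⟨⟨0, hn⟩⟩
    obtain ⟨u0, v0, huv⟩ := G.exists_dist_eq_diam
    rw [hdiam] at huv
    have hle1 : (1:ℝ) ≤ ∑ v : Fin n, (if G.dist u0 v = d then (1:ℝ) else 0) := by
      have := Finset.single_le_sum (f := fun v => if G.dist u0 v = d then (1:ℝ) else 0)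
        (fun i _ => by positivity) (Finset.mem_univ v0)
      simpa [huv] using this
    have hle2 : ∑ v : Fin n, (if G.dist u0 v = d then (1:ℝ) else 0) ≤ N := by
      rw [hN]
      exact Finset.single_le_sum
        (f := fun u => ∑ v : Fin n, (if G.dist u v = d then (1:ℝ) else 0))
        (fun i _ => Finset.sum_nonneg fun j _ => by positivity) (Finset.mem_univ u0)
    linarith
  have hNne : N ≠ 0 := ne_of_gt hNpos
  have key : ip ((G.adjMatrix ℝ) ^ d) (distMatrix G d) /
      ip (distMatrix G d) (distMatrix G d) = 1 / ω := by
    rw [ip, ip, htr1, htr2]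
    have hn' : (n:ℝ) ≠ 0 := Nat.cast_ne_zero.mpr hn.ne'
    field_simp
  refine ⟨key, ?_⟩
  rw [key, hlead, one_div_div]
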